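/- Duality of anti-hook symbols under S̃: for indices k = (k₁,…,k_r), l = (l₁,…,l_s) and positive integer a, S̃([k // l; a]) = (−1)^{r+s+1} [l // k; a] in ℐ, where S̃([m]) = (−1)^{dep m}[m]^⋆. -/

import Mathlib

/-- An index: a finite sequence of positive integers. -/
abbrev Idx := List ℕ+

/-- The `ℚ`-linear space `ℐ` spanned by formal symbols of indices. -/
abbrev IdxAlg := Idx →₀ ℚ

/-- Auxiliary harmonic product on indices *stored in reversed order*, so that the
recursion acts on the last components of the original indices, as in the paper:
`[k,k]∗[l,l] = [([k,k]∗[l]),l] + [([k]∗[l,l]),k] + [([k]∗[l]),k+l]`. -/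
noncomputable def hpAux : Idx → Idx → IdxAlg
  | [], l => Finsupp.single l 1
  | a :: as, [] => Finsupp.single (a :: as) 1
  | a :: as, b :: bs =>
      Finsupp.mapDomain (a :: ·) (hpAux as (b :: bs)) +
      Finsupp.mapDomain (b :: ·) (hpAux (a :: as) bs) +
      Finsupp.mapDomain ((a + b) :: ·) (hpAux as bs)
termination_by k l => k.length + l.length

/-- The harmonic (stuffle) product of two index symbols. -/
noncomputable def hp (k l : Idx) : IdxAlg :=
  Finsupp.mapDomain List.reverse (hpAux k.reverse l.reverse)

/-- The bilinear extension of the harmonic product to `ℐ`. -/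
noncomputable def hmul (u v : IdxAlg) : IdxAlg :=
  u.sum fun k ck => v.sum fun l cl => (ck * cl) • hp k l

/-- The star-sum `[l₁,…,l_s]^⋆`: the sum of all `[l₁□⋯□l_s]` with each `□` replaced by
`+` or `,`. -/
noncomputable def starSym : Idx → IdxAlg
  | [] => Finsupp.single [] 1
  | [a] => Finsupp.single [a] 1
  | a :: b :: rest =>
      Finsupp.mapDomain (a :: ·) (starSym (b :: rest)) + starSym ((a + b) :: rest)
termination_by l => l.length

/-- The linear map `S̃ : ℐ → ℐ` with `S̃([k]) = (−1)^{dep k}[k]^⋆`. -/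
noncomputable def Stilde (u : IdxAlg) : IdxAlg :=
  u.sum fun k c => ((-1 : ℚ) ^ k.length * c) • starSym k

/-- The defining properties of the anti-hook symbols `[k // l; a] ∈ ℐ`:
(1) `[(k)//∅; a] = [k,a]` and `[∅//(l); a] = [l,a]^⋆`;
(2) `[(k₁,…,k_{r−1})//(l); k_r] + [(k)//(l₁,…,l_{s−1}); l_s] = [k₁,…,k_r] ∗ [l₁,…,l_s]^⋆`
for nonempty `k`, `l`. -/
def IsAntiHook (AH : Idx → Idx → ℕ+ → IdxAlg) : Prop :=
  (∀ (k : Idx) (a : ℕ+), AH k [] a = Finsupp.single (k ++ [a]) 1) ∧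
  (∀ (l : Idx) (a : ℕ+), AH [] l a = starSym (l ++ [a])) ∧
  (∀ (k l : Idx) (a b : ℕ+),
    AH k (l ++ [b]) a + AH (k ++ [a]) l b =
      hmul (Finsupp.single (k ++ [a]) 1) (starSym (l ++ [b])))

noncomputable def consF (a : ℕ+) (u : IdxAlg) : IdxAlg := Finsupp.mapDomain (a :: ·) u

noncomputable def appF (a : ℕ+) (u : IdxAlg) : IdxAlg := Finsupp.mapDomain (· ++ [a]) u

def headAdd (a : ℕ+) : Idx → Idx
  | [] => [a]
  | h :: t => (a + h) :: t

noncomputable def haddF (a : ℕ+) (u : IdxAlg) : IdxAlg :=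
  Finsupp.mapDomain (headAdd a) u - Finsupp.single [a] (u [])

@[simp] lemma consF_single (a : ℕ+) (m : Idx) (c : ℚ) :
    consF a (Finsupp.single m c) = Finsupp.single (a :: m) c := by
  simp [consF]

@[simp] lemma appF_single (a : ℕ+) (m : Idx) (c : ℚ) :
    appF a (Finsupp.single m c) = Finsupp.single (m ++ [a]) c := by
  simp [appF]

@[simp] lemma consF_zero (a : ℕ+) : consF a 0 = 0 := by simp [consF]
@[simp] lemma appF_zero (a : ℕ+) : appF a 0 = 0 := by simp [appF]
@[simp] lemma haddF_zero (a : ℕ+) : haddF a 0 = 0 := by simp [haddF]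

lemma consF_add (a : ℕ+) (u v : IdxAlg) : consF a (u + v) = consF a u + consF a v := by
  simp [consF, Finsupp.mapDomain_add]

lemma appF_add (a : ℕ+) (u v : IdxAlg) : appF a (u + v) = appF a u + appF a v := by
  simp [appF, Finsupp.mapDomain_add]

lemma haddF_add (a : ℕ+) (u v : IdxAlg) : haddF a (u + v) = haddF a u + haddF a v := by
  simp only [haddF, Finsupp.mapDomain_add, Finsupp.add_apply, Finsupp.single_add]
  abel

lemma consF_smul (a : ℕ+) (c : ℚ) (u : IdxAlg) : consF a (c • u) = c • consF a u := by
  simp [consF, Finsupp.mapDomain_smul]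

lemma haddF_smul (a : ℕ+) (c : ℚ) (u : IdxAlg) : haddF a (c • u) = c • haddF a u := by
  simp only [haddF, Finsupp.mapDomain_smul, Finsupp.smul_apply, smul_sub]
  congr 1
  rw [Finsupp.smul_single, smul_eq_mul]

lemma consF_neg (a : ℕ+) (u : IdxAlg) : consF a (-u) = -consF a u := by
  simpa [neg_one_smul] using consF_smul a (-1) u

lemma haddF_neg (a : ℕ+) (u : IdxAlg) : haddF a (-u) = -haddF a u := by
  simpa [neg_one_smul] using haddF_smul a (-1) u

lemma consF_sub (a : ℕ+) (u v : IdxAlg) : consF a (u - v) = consF a u - consF a v := by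
  rw [sub_eq_add_neg, consF_add, consF_neg, sub_eq_add_neg]

lemma haddF_sub (a : ℕ+) (u v : IdxAlg) : haddF a (u - v) = haddF a u - haddF a v := by
  rw [sub_eq_add_neg, haddF_add, haddF_neg, sub_eq_add_neg]

@[simp] lemma consF_apply_nil (a : ℕ+) (u : IdxAlg) : consF a u ([] : Idx) = 0 := by
  rw [consF, Finsupp.mapDomain_notin_range]
  rintro ⟨m, hm⟩
  simp at hm

@[simp] lemma haddF_single_cons (a b : ℕ+) (t : Idx) (c : ℚ) :
    haddF a (Finsupp.single (b :: t) c) = Finsupp.single ((a + b) :: t) c := by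
  simp [haddF, headAdd, Finsupp.single_apply]

@[simp] lemma haddF_single_nil (a : ℕ+) (c : ℚ) :
    haddF a (Finsupp.single ([] : Idx) c) = 0 := by
  simp [haddF, headAdd]

lemma haddF_consF (a b : ℕ+) (u : IdxAlg) : haddF a (consF b u) = consF (a + b) u := by
  have h : (consF b u) ([] : Idx) = 0 := consF_apply_nil b u
  rw [haddF, h, Finsupp.single_zero, sub_zero, consF, consF, ← Finsupp.mapDomain_comp]
  rfl

lemma appF_consF (x y : ℕ+) (u : IdxAlg) : appF x (consF y u) = consF y (appF x u) := by
  rw [appF, consF, ← Finsupp.mapDomain_comp, consF, appF, ← Finsupp.mapDomain_comp]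
  rfl

/-! ### hpAux equations and reversal -/

lemma hpAux_nil_left (l : Idx) : hpAux [] l = Finsupp.single l 1 := by
  rw [hpAux]

lemma hpAux_nil_right (k : Idx) : hpAux k [] = Finsupp.single k 1 := by
  cases k <;> rw [hpAux]

lemma hpAux_cons_cons (a b : ℕ+) (as bs : Idx) :
    hpAux (a :: as) (b :: bs) =
      consF a (hpAux as (b :: bs)) + consF b (hpAux (a :: as) bs) +
        consF (a + b) (hpAux as bs) := by
  rw [hpAux]; rfl

theorem hpAux_append (a b : ℕ+) : ∀ (k l : Idx),
    hpAux (k ++ [a]) (l ++ [b]) =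
      appF b (hpAux (k ++ [a]) l) + appF a (hpAux k (l ++ [b])) +
        appF (a + b) (hpAux k l)
  | [], [] => by
      simp only [List.nil_append, hpAux_nil_left, hpAux_nil_right, hpAux_cons_cons,
        consF_single, appF_single]
      simp
  | [], d :: lt => by
      have IH := hpAux_append a b [] lt
      simp only [List.nil_append, List.cons_append] at *
      rw [hpAux_cons_cons, hpAux_cons_cons, IH]
      simp only [hpAux_nil_left, appF_add, appF_single, consF_add, consF_single,
        appF_consF, List.cons_append, List.append_assoc]
      abel
  | c :: kt, [] => by
      have IH := hpAux_append a b kt []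
      simp only [List.nil_append, List.cons_append] at *
      rw [hpAux_cons_cons, hpAux_cons_cons, IH]
      simp only [hpAux_nil_right, appF_add, appF_single, consF_add, consF_single,
        appF_consF, List.cons_append, List.append_assoc]
      abel
  | c :: kt, d :: lt => by
      have IH1 := hpAux_append a b kt (d :: lt)
      have IH2 := hpAux_append a b (c :: kt) lt
      have IH3 := hpAux_append a b kt lt
      simp only [List.cons_append] at *
      simp only [hpAux_cons_cons]
      rw [IH1, IH2, IH3]
      simp only [consF_add, appF_add, appF_consF]
      abel
termination_by k l => k.length + l.length
decreasing_by all_goals simp [List.length_append] <;> omega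

theorem hpAux_reverse : ∀ (k l : Idx),
    Finsupp.mapDomain List.reverse (hpAux k l) = hpAux k.reverse l.reverse
  | [], l => by
      simp [hpAux_nil_left, hpAux_nil_right, Finsupp.mapDomain_single]
  | a :: as, [] => by
      simp [hpAux_nil_left, hpAux_nil_right, Finsupp.mapDomain_single]
  | a :: as, b :: bs => by
      have IH1 := hpAux_reverse as (b :: bs)
      have IH2 := hpAux_reverse (a :: as) bs
      have IH3 := hpAux_reverse as bs
      rw [hpAux_cons_cons]
      have hc : ∀ (x : ℕ+) (w : IdxAlg),
          Finsupp.mapDomain List.reverse (consF x w) =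
            appF x (Finsupp.mapDomain List.reverse w) := by
        intro x w
        rw [consF, appF, ← Finsupp.mapDomain_comp, ← Finsupp.mapDomain_comp]
        congr 1
        funext m
        simp
      rw [Finsupp.mapDomain_add, Finsupp.mapDomain_add, hc, hc, hc, IH1, IH2, IH3]
      rw [show (a :: as).reverse = as.reverse ++ [a] from by simp,
        show (b :: bs).reverse = bs.reverse ++ [b] from by simp, hpAux_append]
      abel
termination_by k l => k.length + l.length
decreasing_by all_goals simp <;> omega

lemma hp_eq (k l : Idx) : hp k l = hpAux k l := by
  rw [hp, hpAux_reverse, List.reverse_reverse, List.reverse_reverse]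

lemma hp_nil_left (l : Idx) : hp [] l = Finsupp.single l 1 := by
  rw [hp_eq, hpAux_nil_left]

lemma hp_nil_right (k : Idx) : hp k [] = Finsupp.single k 1 := by
  rw [hp_eq, hpAux_nil_right]

lemma hp_cons_cons (a b : ℕ+) (as bs : Idx) :
    hp (a :: as) (b :: bs) =
      consF a (hp as (b :: bs)) + consF b (hp (a :: as) bs) +
        consF (a + b) (hp as bs) := by
  simp only [hp_eq]; exact hpAux_cons_cons a b as bs

theorem hp_comm : ∀ (k l : Idx), hp k l = hp l k
  | [], l => by rw [hp_nil_left, hp_nil_right]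
  | a :: as, [] => by rw [hp_nil_left, hp_nil_right]
  | a :: as, b :: bs => by
      rw [hp_cons_cons, hp_cons_cons, hp_comm as (b :: bs), hp_comm (a :: as) bs,
        hp_comm as bs, add_comm a b]
      abel
termination_by k l => k.length + l.length
decreasing_by all_goals simp <;> omega

/-! ### Bilinearity of hmul -/

noncomputable def hmulInner (k : Idx) : IdxAlg →ₗ[ℚ] IdxAlg :=
  Finsupp.lsum ℚ fun l => LinearMap.toSpanSingleton ℚ IdxAlg (hp k l)

noncomputable def hmulHom : IdxAlg →ₗ[ℚ] IdxAlg →ₗ[ℚ] IdxAlg :=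
  Finsupp.lsum ℚ fun k => LinearMap.toSpanSingleton ℚ (IdxAlg →ₗ[ℚ] IdxAlg) (hmulInner k)

lemma hmul_eq (u v : IdxAlg) : hmul u v = hmulHom u v := by
  rw [hmul, hmulHom, Finsupp.lsum_apply, Finsupp.sum, Finsupp.sum, LinearMap.sum_apply]
  refine Finset.sum_congr rfl fun k _ => ?_
  rw [LinearMap.toSpanSingleton_apply, LinearMap.smul_apply, hmulInner, Finsupp.lsum_apply,
    Finsupp.smul_sum, Finsupp.sum, Finsupp.sum]
  refine Finset.sum_congr rfl fun l _ => ?_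
  rw [LinearMap.toSpanSingleton_apply, smul_smul, mul_comm]

lemma hmul_add_left (u v w : IdxAlg) : hmul (u + v) w = hmul u w + hmul v w := by
  simp [hmul_eq]

lemma hmul_add_right (u v w : IdxAlg) : hmul u (v + w) = hmul u v + hmul u w := by
  simp [hmul_eq]

lemma hmul_smul_left (c : ℚ) (u v : IdxAlg) : hmul (c • u) v = c • hmul u v := by
  simp [hmul_eq]

lemma hmul_smul_right (c : ℚ) (u v : IdxAlg) : hmul u (c • v) = c • hmul u v := by
  simp [hmul_eq]

@[simp] lemma hmul_zero_left (v : IdxAlg) : hmul 0 v = 0 := by simp [hmul_eq]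
@[simp] lemma hmul_zero_right (u : IdxAlg) : hmul u 0 = 0 := by simp [hmul_eq]

lemma hmul_sub_left (u v w : IdxAlg) : hmul (u - v) w = hmul u w - hmul v w := by
  simp [hmul_eq]

lemma hmul_sub_right (u v w : IdxAlg) : hmul u (v - w) = hmul u v - hmul u w := by
  simp [hmul_eq]

lemma hmul_single_single (k l : Idx) (c d : ℚ) :
    hmul (Finsupp.single k c) (Finsupp.single l d) = (c * d) • hp k l := by
  rw [hmul_eq, hmulHom, Finsupp.lsum_single, LinearMap.toSpanSingleton_apply,
    LinearMap.smul_apply, hmulInner, Finsupp.lsum_single, LinearMap.toSpanSingleton_apply,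
    smul_smul]

lemma hmul_one_left (v : IdxAlg) : hmul (Finsupp.single ([] : Idx) 1) v = v := by
  rw [hmul, Finsupp.sum_single_index]
  · rw [show v.sum (fun l cl => (1 * cl) • hp [] l) = v.sum (fun l cl => Finsupp.single l cl) from ?_,
      Finsupp.sum_single]
    refine Finsupp.sum_congr fun l _ => ?_
    rw [hp_nil_left, one_mul, Finsupp.smul_single, smul_eq_mul, mul_one]
  · simp

lemma hmul_one_right (u : IdxAlg) : hmul u (Finsupp.single ([] : Idx) 1) = u := by
  rw [hmul]
  rw [show u.sum (fun k ck => (Finsupp.single ([] : Idx) 1).sum fun l cl => (ck * cl) • hp k l)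
      = u.sum (fun k ck => Finsupp.single k ck) from ?_, Finsupp.sum_single]
  refine Finsupp.sum_congr fun k _ => ?_
  rw [Finsupp.sum_single_index]
  · rw [hp_nil_right, mul_one, Finsupp.smul_single, smul_eq_mul, mul_one]
  · simp

lemma hmul_comm (u v : IdxAlg) : hmul u v = hmul v u := by
  rw [hmul, hmul, Finsupp.sum_comm]
  refine Finsupp.sum_congr fun k _ => Finsupp.sum_congr fun l _ => ?_
  rw [hp_comm, mul_comm]

lemma hmul_consF_consF (a b : ℕ+) (u v : IdxAlg) :
    hmul (consF a u) (consF b v) =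
      consF a (hmul u (consF b v)) + consF b (hmul (consF a u) v) +
        consF (a + b) (hmul u v) := by
  induction u using Finsupp.induction_linear with
  | zero => simp
  | add u1 u2 h1 h2 =>
      simp only [consF_add, hmul_add_left]
      rw [h1, h2]
      abel
  | single k c =>
      induction v using Finsupp.induction_linear with
      | zero => simp
      | add v1 v2 h1 h2 =>
          simp only [consF_add, hmul_add_right]
          rw [h1, h2]
          abel
      | single l d =>
          rw [consF_single, consF_single, hmul_single_single, hmul_single_single,
            hmul_single_single, hmul_single_single, hp_cons_cons]
          rw [smul_add, smul_add, consF_smul, consF_smul, consF_smul]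

/-! ### starSym equations -/

lemma starSym_nil : starSym [] = Finsupp.single ([] : Idx) 1 := by rw [starSym]

lemma starSym_singleton (a : ℕ+) : starSym [a] = Finsupp.single [a] 1 := by rw [starSym]

lemma starSym_cons_cons (a b : ℕ+) (t : Idx) :
    starSym (a :: b :: t) = consF a (starSym (b :: t)) + starSym ((a + b) :: t) := by
  rw [starSym]; rfl

/-! ### alphaF and muF -/

noncomputable def alphaF : ℕ+ → Idx → IdxAlg → IdxAlg
  | e, [], v => consF e v
  | e, c :: t, v => consF e (hmul (starSym (c :: t)) v) + alphaF (e + c) t v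

lemma alphaF_nil (e : ℕ+) (v : IdxAlg) : alphaF e [] v = consF e v := rfl

lemma alphaF_cons (e c : ℕ+) (t : Idx) (v : IdxAlg) :
    alphaF e (c :: t) v = consF e (hmul (starSym (c :: t)) v) + alphaF (e + c) t v := rfl

noncomputable def muF : ℕ+ → Idx → Idx → IdxAlg
  | e, [], l => starSym (e :: l)
  | e, c :: kt, [] => starSym (e :: c :: kt)
  | e, c :: kt, d :: lt =>
      consF e (hmul (starSym (c :: kt)) (starSym (d :: lt))) +
        muF (e + c) kt (d :: lt) + muF (e + d) (c :: kt) lt - muF (e + c + d) kt lt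
termination_by e k l => k.length + l.length

lemma muF_nil_left (e : ℕ+) (l : Idx) : muF e [] l = starSym (e :: l) := by rw [muF]

lemma muF_nil_right (e : ℕ+) (k : Idx) : muF e k [] = starSym (e :: k) := by
  cases k <;> rw [muF]

lemma muF_cons_cons (e c d : ℕ+) (kt lt : Idx) :
    muF e (c :: kt) (d :: lt) =
      consF e (hmul (starSym (c :: kt)) (starSym (d :: lt))) +
        muF (e + c) kt (d :: lt) + muF (e + d) (c :: kt) lt - muF (e + c + d) kt lt := by
  rw [muF]

lemma alphaF_one : ∀ (k : Idx) (e : ℕ+), alphaF e k (Finsupp.single ([] : Idx) 1) = starSym (e :: k)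
  | [], e => by rw [alphaF_nil, consF_single, starSym_singleton]
  | c :: t, e => by
      rw [alphaF_cons, hmul_one_right, alphaF_one t (e + c), starSym_cons_cons]

lemma alphaF_add_v : ∀ (k : Idx) (e : ℕ+) (v w : IdxAlg),
    alphaF e k (v + w) = alphaF e k v + alphaF e k w
  | [], e, v, w => by rw [alphaF_nil, alphaF_nil, alphaF_nil, consF_add]
  | c :: t, e, v, w => by
      rw [alphaF_cons, alphaF_cons, alphaF_cons, hmul_add_right, consF_add,
        alphaF_add_v t (e + c) v w]
      abel

lemma hadd_alphaF : ∀ (k : Idx) (x e : ℕ+) (v : IdxAlg),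
    haddF x (alphaF e k v) = alphaF (x + e) k v
  | [], x, e, v => by rw [alphaF_nil, alphaF_nil, haddF_consF]
  | c :: t, x, e, v => by
      rw [alphaF_cons, alphaF_cons, haddF_add, haddF_consF, hadd_alphaF t x (e + c) v,
        add_assoc]

lemma hadd_starSym (x c : ℕ+) (t : Idx) :
    haddF x (starSym (c :: t)) = starSym ((x + c) :: t) := by
  rw [← alphaF_one t c, hadd_alphaF, alphaF_one]

lemma hadd_muF : ∀ (k l : Idx) (x e : ℕ+), haddF x (muF e k l) = muF (x + e) k l
  | [], l, x, e => by rw [muF_nil_left, muF_nil_left, hadd_starSym]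
  | c :: kt, [], x, e => by rw [muF_nil_right, muF_nil_right, hadd_starSym]
  | c :: kt, d :: lt, x, e => by
      rw [muF_cons_cons, muF_cons_cons, haddF_sub, haddF_add, haddF_add, haddF_consF,
        hadd_muF kt (d :: lt) x (e + c), hadd_muF (c :: kt) lt x (e + d),
        hadd_muF kt lt x (e + c + d)]
      simp only [add_assoc]
termination_by k l => k.length + l.length
decreasing_by all_goals simp <;> omega

/-! ### key product expansions -/

lemma hmul_star_consF : ∀ (k : Idx) (a b : ℕ+) (v : IdxAlg),
    hmul (starSym (a :: k)) (consF b v) =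
      alphaF a k (consF b v) + consF b (hmul (starSym (a :: k)) v) +
        haddF b (alphaF a k v)
  | [], a, b, v => by
      rw [starSym_singleton, show (Finsupp.single [a] 1 : IdxAlg) = consF a (Finsupp.single [] 1) from (consF_single a [] 1).symm,
        hmul_consF_consF, hmul_one_left, hmul_one_left, alphaF_nil, alphaF_nil,
        haddF_consF, add_comm b a]
  | c :: t, a, b, v => by
      rw [starSym_cons_cons, hmul_add_left, hmul_consF_consF,
        hmul_star_consF t (a + c) b v, alphaF_cons, alphaF_cons,
        hmul_add_left, consF_add, haddF_add, haddF_consF,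
        add_comm b a]
      abel

lemma muF_cons_right : ∀ (k : Idx) (e d : ℕ+) (lt : Idx),
    muF e k (d :: lt) = alphaF e k (starSym (d :: lt)) + muF (e + d) k lt
  | [], e, d, lt => by
      rw [muF_nil_left, muF_nil_left, starSym_cons_cons, alphaF_nil]
  | c :: kt, e, d, lt => by
      rw [muF_cons_cons, muF_cons_right kt (e + c) d lt, alphaF_cons]
      abel

theorem hmul_star_star (a : ℕ+) (k : Idx) : ∀ (l : Idx) (b : ℕ+),
    hmul (starSym (a :: k)) (starSym (b :: l)) =
      alphaF a k (starSym (b :: l)) + alphaF b l (starSym (a :: k)) + muF (a + b) k l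
  | [], b => by
      rw [starSym_singleton, show (Finsupp.single [b] 1 : IdxAlg) = consF b (Finsupp.single [] 1) from (consF_single b [] 1).symm,
        hmul_star_consF, hmul_one_right, hadd_alphaF, alphaF_one, alphaF_nil,
        muF_nil_right, add_comm b a]
  | d :: lt, b => by
      rw [starSym_cons_cons, hmul_add_right, hmul_star_consF,
        hmul_star_star a k lt (b + d), alphaF_add_v, alphaF_cons,
        muF_cons_right, hadd_alphaF, add_comm b a, hmul_comm (starSym (d :: lt)),
        ← add_assoc a b d]
      abel

/-! ### The key "signed stuffle" identity -/

set_option maxHeartbeats 2000000 in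
theorem key_SS : ∀ (a : ℕ+) (k : Idx) (b : ℕ+) (l : Idx),
    hmul (starSym (a :: k)) (starSym (b :: l)) =
      (consF a (hmul (starSym k) (starSym (b :: l))) +
        haddF a (hmul (starSym k) (starSym (b :: l)))) +
      (consF b (hmul (starSym (a :: k)) (starSym l)) +
        haddF b (hmul (starSym (a :: k)) (starSym l))) -
      (consF (a + b) (hmul (starSym k) (starSym l)) +
        haddF (a + b) (hmul (starSym k) (starSym l)))
  | a, [], b, [] => by
      simp only [starSym_nil, starSym_singleton, hmul_one_left, hmul_one_right,
        hmul_single_single, one_mul, one_smul, hp_cons_cons, hp_nil_left, hp_nil_right,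
        consF_single, haddF_single_cons, haddF_single_nil, add_zero]
      rw [add_comm b a]
      abel
  | a, [], b, d :: lt => by
      have e1 := hmul_star_star a [] (d :: lt) b
      have eY := hmul_star_star a [] lt d
      simp only [starSym_nil, hmul_one_left]
      simp only [e1, eY, alphaF_cons, alphaF_nil, muF_nil_left, consF_add, haddF_add,
        haddF_consF, hadd_alphaF, hadd_starSym]
      rw [hmul_comm (starSym (d :: lt)) (starSym [a])]
      simp only [eY, alphaF_cons, alphaF_nil, muF_nil_left, consF_add, haddF_add,
        haddF_consF, hadd_alphaF, hadd_starSym]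
      simp only [add_comm, add_left_comm, add_assoc]
      abel
  | a, c :: kt, b, [] => by
      have h := key_SS b [] a (c :: kt)
      rw [hmul_comm (starSym (a :: c :: kt)) (starSym [b]),
        hmul_comm (starSym (c :: kt)) (starSym [b]),
        hmul_comm (starSym (a :: c :: kt)) (starSym []),
        hmul_comm (starSym (c :: kt)) (starSym []),
        add_comm a b, h]
      abel
  | a, c :: kt, b, d :: lt => by
      have e1 := hmul_star_star a (c :: kt) (d :: lt) b
      have eXQ := hmul_star_star c kt (d :: lt) b
      have ePY := hmul_star_star a (c :: kt) lt d
      have eXY := hmul_star_star c kt lt d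
      simp only [e1, eXQ, ePY, eXY, alphaF_cons, alphaF_nil, muF_cons_cons, consF_add,
        haddF_add, haddF_sub, consF_sub, haddF_consF, hadd_alphaF, hadd_muF]
      rw [hmul_comm (starSym (d :: lt)) (starSym (c :: kt)),
        hmul_comm (starSym (d :: lt)) (starSym (a :: c :: kt))]
      simp only [eXQ, ePY, eXY, alphaF_cons, alphaF_nil, muF_cons_cons, consF_add,
        haddF_add, haddF_sub, consF_sub, haddF_consF, hadd_alphaF, hadd_muF]
      simp only [show ∀ x y : ℕ+, x + y = y + x from fun x y => add_comm x y,
        show ∀ x y z : ℕ+, x + (y + z) = y + (x + z) from fun x y z => add_left_comm x y z,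
        show ∀ x y z : ℕ+, x + y + z = x + (y + z) from fun x y z => add_assoc x y z]
      abel
termination_by a k b l => k.length

/-! ### Linearity of Stilde -/

noncomputable def StildeHom : IdxAlg →ₗ[ℚ] IdxAlg :=
  Finsupp.lsum ℚ fun k => LinearMap.toSpanSingleton ℚ IdxAlg (((-1 : ℚ) ^ k.length) • starSym k)

lemma Stilde_eq (u : IdxAlg) : Stilde u = StildeHom u := by
  rw [Stilde, StildeHom, Finsupp.lsum_apply]
  refine Finsupp.sum_congr fun k _ => ?_
  rw [LinearMap.toSpanSingleton_apply, smul_smul, mul_comm]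

lemma Stilde_add (u v : IdxAlg) : Stilde (u + v) = Stilde u + Stilde v := by
  simp [Stilde_eq]

lemma Stilde_smul (c : ℚ) (u : IdxAlg) : Stilde (c • u) = c • Stilde u := by
  simp [Stilde_eq]

lemma Stilde_sub (u v : IdxAlg) : Stilde (u - v) = Stilde u - Stilde v := by
  simp [Stilde_eq]

@[simp] lemma Stilde_zero : Stilde 0 = 0 := by simp [Stilde_eq]

lemma Stilde_single (m : Idx) (c : ℚ) :
    Stilde (Finsupp.single m c) = ((-1 : ℚ) ^ m.length * c) • starSym m := by
  rw [Stilde_eq, StildeHom, Finsupp.lsum_single, LinearMap.toSpanSingleton_apply,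
    smul_smul, mul_comm]

lemma Stilde_consF (x : ℕ+) (u : IdxAlg) :
    Stilde (consF x u) = -(consF x (Stilde u) + haddF x (Stilde u)) := by
  induction u using Finsupp.induction_linear with
  | zero => simp
  | add u v hu hv =>
      rw [consF_add, Stilde_add, hu, hv, Stilde_add, consF_add, haddF_add]
      abel
  | single m c =>
      cases m with
      | nil =>
          rw [consF_single, Stilde_single, Stilde_single, starSym_singleton, starSym_nil,
            Finsupp.smul_single, Finsupp.smul_single, consF_single, haddF_single_nil]
          simp
      | cons b t =>
          rw [consF_single, Stilde_single, Stilde_single, starSym_cons_cons,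
            consF_smul, haddF_smul, hadd_starSym]
          simp only [List.length_cons]
          module

lemma Stilde_starSym : ∀ (m : Idx),
    Stilde (starSym m) = ((-1 : ℚ) ^ m.length) • Finsupp.single m 1
  | [] => by rw [starSym_nil, Stilde_single, starSym_nil]; simp
  | [a] => by rw [starSym_singleton, Stilde_single, starSym_singleton]; simp
  | a :: b :: t => by
      rw [starSym_cons_cons, Stilde_add, Stilde_consF, Stilde_starSym (b :: t),
        Stilde_starSym ((a + b) :: t), consF_smul, haddF_smul, consF_single,
        haddF_single_cons]
      simp only [List.length_cons]
      module
termination_by m => m.length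
decreasing_by all_goals simp <;> omega

/-! ### Multiplicativity of Stilde -/

theorem Stilde_hp : ∀ (k l : Idx),
    Stilde (hp k l) = ((-1 : ℚ) ^ (k.length + l.length)) • hmul (starSym k) (starSym l)
  | [], l => by
      rw [hp_nil_left, Stilde_single, starSym_nil, hmul_one_left]
      simp
  | a :: as, [] => by
      rw [hp_nil_right, Stilde_single, starSym_nil, hmul_one_right]
      simp
  | a :: as, b :: bs => by
      have IH1 := Stilde_hp as (b :: bs)
      have IH2 := Stilde_hp (a :: as) bs
      have IH3 := Stilde_hp as bs
      rw [hp_cons_cons, Stilde_add, Stilde_add, Stilde_consF, Stilde_consF, Stilde_consF,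
        IH1, IH2, IH3, key_SS a as b bs]
      simp only [consF_smul, haddF_smul, List.length_cons]
      module
termination_by k l => k.length + l.length
decreasing_by all_goals simp <;> omega

theorem Stilde_hmul (u v : IdxAlg) : Stilde (hmul u v) = hmul (Stilde u) (Stilde v) := by
  induction u using Finsupp.induction_linear with
  | zero => simp
  | add u1 u2 h1 h2 => rw [hmul_add_left, Stilde_add, h1, h2, Stilde_add, hmul_add_left]
  | single k c =>
      induction v using Finsupp.induction_linear with
      | zero => simp
      | add v1 v2 h1 h2 => rw [hmul_add_right, Stilde_add, h1, h2, Stilde_add, hmul_add_right]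
      | single l d =>
          rw [hmul_single_single, Stilde_smul, Stilde_hp, Stilde_single, Stilde_single,
            hmul_smul_left, hmul_smul_right]
          module

/-- Duality of anti-hook symbols under `S̃`: for indices `k = (k₁,…,k_r)`, `l = (l₁,…,l_s)`
and a positive integer `a`, `S̃([k // l; a]) = (−1)^{r+s+1} [l // k; a]` in `ℐ`. -/
theorem Stilde_antiHook (AH : Idx → Idx → ℕ+ → IdxAlg) (hAH : IsAntiHook AH)
    (k l : Idx) (a : ℕ+) :
    Stilde (AH k l a) = ((-1 : ℚ) ^ (k.length + l.length + 1)) • AH l k a := by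
  obtain ⟨h1, h2, h3⟩ := hAH
  induction l using List.reverseRecOn generalizing k a with
  | nil =>
      rw [h1, h2, Stilde_single]
      simp [List.length_append]
  | append_singleton l' b ih =>
      have e3' := h3 l' k b a
      have hk : AH k (l' ++ [b]) a =
          hmul (Finsupp.single (k ++ [a]) 1) (starSym (l' ++ [b])) - AH (k ++ [a]) l' b := by
        rw [← h3 k l' a b]; abel
      rw [hk, Stilde_sub, Stilde_hmul, Stilde_single, Stilde_starSym, ih (k ++ [a]) b,
        hmul_smul_left, hmul_smul_right, hmul_comm, ← e3']
      simp only [List.length_append, List.length_cons, List.length_nil, mul_one]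
      module
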